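/- Let A be an invertible linear map on ℝ^n with invariant splitting ℝ^n = E^s ⊕ E^u and λ ∈ (0,1) such that ‖A^n|_{E^s}‖ ≤ λ^n and ‖A^{-n}|_{E^u}‖ ≤ λ^n for n ≥ 0. Then A has the shadowing property on ℝ^n. -/

import Mathlib

set_option maxHeartbeats 1000000

/-- An invertible linear map `A` of `ℝ^n` with an invariant hyperbolic splitting
`ℝ^n = E^s ⊕ E^u`, contracting on `E^s` and expanding on `E^u` at uniform rate
`λ ∈ (0,1)`, has the shadowing property on `ℝ^n`. -/
theorem hyperbolic_linear_shadowing (n : ℕ)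
    (A : Matrix (Fin n) (Fin n) ℝ) (hA : IsUnit A)
    (Es Eu : Submodule ℝ (EuclideanSpace ℝ (Fin n)))
    (hcompl : IsCompl Es Eu)
    (hinvs : ∀ v ∈ Es, Matrix.toEuclideanLin A v ∈ Es)
    (hinvu : ∀ v ∈ Eu, Matrix.toEuclideanLin A v ∈ Eu)
    (lam : ℝ) (hlam0 : 0 < lam) (hlam1 : lam < 1)
    (hs : ∀ m : ℕ, ∀ v ∈ Es, ‖Matrix.toEuclideanLin (A ^ m) v‖ ≤ lam ^ m * ‖v‖)
    (hu : ∀ m : ℕ, ∀ v ∈ Eu, ‖Matrix.toEuclideanLin (A⁻¹ ^ m) v‖ ≤ lam ^ m * ‖v‖) :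
    ∀ ε > (0 : ℝ), ∃ δ > (0 : ℝ), ∀ x : ℤ → EuclideanSpace ℝ (Fin n),
      (∀ i : ℤ, ‖Matrix.toEuclideanLin A (x i) - x (i + 1)‖ < δ) →
      ∃ z : EuclideanSpace ℝ (Fin n),
        ∀ i : ℤ, ‖Matrix.toEuclideanLin (A ^ i) z - x i‖ < ε := by
  classical
  intro ε hε
  set E := EuclideanSpace ℝ (Fin n)
  have hdet : IsUnit A.det := (Matrix.isUnit_iff_isUnit_det A).mp hA
  -- multiplicativity of toEuclideanLin
  have hmul : ∀ (M N : Matrix (Fin n) (Fin n) ℝ) (v : E),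
      Matrix.toEuclideanLin (M * N) v = Matrix.toEuclideanLin M (Matrix.toEuclideanLin N v) := by
    intro M N v
    simp [Matrix.toEuclideanLin_apply, Matrix.mulVec_mulVec]
  have hone : ∀ v : E, Matrix.toEuclideanLin (1 : Matrix (Fin n) (Fin n) ℝ) v = v := by
    intro v; simp [Matrix.toEuclideanLin_apply]
  -- the continuous linear maps
  set L : E →L[ℝ] E := LinearMap.toContinuousLinearMap (Matrix.toEuclideanLin A) with hLdef
  set Li : E →L[ℝ] E := LinearMap.toContinuousLinearMap (Matrix.toEuclideanLin A⁻¹) with hLidef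
  have hLapp : ∀ v : E, L v = Matrix.toEuclideanLin A v := fun v => rfl
  have hLiapp : ∀ v : E, Li v = Matrix.toEuclideanLin A⁻¹ v := fun v => rfl
  have hLiL : ∀ v : E, Li (L v) = v := by
    intro v
    rw [hLapp, hLiapp, ← hmul, Matrix.nonsing_inv_mul A hdet, hone]
  have hLLi : ∀ v : E, L (Li v) = v := by
    intro v
    rw [hLapp, hLiapp, ← hmul, Matrix.mul_nonsing_inv A hdet, hone]
  -- powers
  have hLpow : ∀ (m : ℕ) (v : E), (L ^ m) v = Matrix.toEuclideanLin (A ^ m) v := by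
    intro m
    induction m with
    | zero => intro v; simp [hone]
    | succ k ih =>
        intro v
        rw [pow_succ', pow_succ', hmul, ← ih, ContinuousLinearMap.mul_apply, hLapp]
  have hLipow : ∀ (m : ℕ) (v : E), (Li ^ m) v = Matrix.toEuclideanLin (A⁻¹ ^ m) v := by
    intro m
    induction m with
    | zero => intro v; simp [hone]
    | succ k ih =>
        intro v
        rw [pow_succ', pow_succ', hmul, ← ih, ContinuousLinearMap.mul_apply, hLiapp]
  -- projections
  set ps : E →ₗ[ℝ] E := Es.subtype.comp (Es.linearProjOfIsCompl Eu hcompl) with hpsdef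
  set Ps : E →L[ℝ] E := LinearMap.toContinuousLinearMap ps with hPsdef
  set Pu : E →L[ℝ] E := ContinuousLinearMap.id ℝ E - Ps with hPudef
  have hPs_mem : ∀ v : E, Ps v ∈ Es := fun v => (Es.linearProjOfIsCompl Eu hcompl v).2
  have hPsPu : ∀ v : E, Ps v + Pu v = v := by
    intro v; simp [hPudef]
  have hPu_mem : ∀ v : E, Pu v ∈ Eu := by
    intro v
    have hv : ∃ s ∈ Es, ∃ u ∈ Eu, s + u = v := by
      obtain ⟨s, u, hs, hu, h⟩ := Submodule.codisjoint_iff_exists_add_eq.mp hcompl.codisjoint v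
      exact ⟨s, hs, u, hu, h⟩
    obtain ⟨s, hsm, u, hum, hv⟩ := hv
    have h1 : Ps v = s := by
      have : Ps v = Es.linearProjOfIsCompl Eu hcompl v := rfl
      rw [this, ← hv]
      have : Es.linearProjOfIsCompl Eu hcompl s = ⟨s, hsm⟩ :=
        Submodule.linearProjOfIsCompl_apply_left hcompl ⟨s, hsm⟩
      have hu0 : Es.linearProjOfIsCompl Eu hcompl u = 0 :=
        Submodule.linearProjOfIsCompl_apply_right' hcompl hum
      rw [map_add, this, hu0]
      simp
    have : Pu v = u := by
      have h2 : Pu v = v - Ps v := by simp [hPudef]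
      rw [h2, h1, ← hv]; abel
    rw [this]; exact hum
  -- constants
  set Cs : ℝ := ‖Ps‖ with hCsdef
  set Cu : ℝ := ‖Pu‖ with hCudef
  have hCs0 : 0 ≤ Cs := norm_nonneg _
  have hCu0 : 0 ≤ Cu := norm_nonneg _
  have h1lam : 0 < 1 - lam := by linarith
  set δ : ℝ := ε * (1 - lam) / (2 * (Cs + Cu + 1)) with hδdef
  have hCsCu1 : 0 < Cs + Cu + 1 := by linarith
  have hδ0 : 0 < δ := by positivity
  refine ⟨δ, hδ0, ?_⟩
  intro x hx
  set e : ℤ → E := fun i => Matrix.toEuclideanLin A (x i) - x (i + 1) with hedef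
  have he : ∀ i, ‖e i‖ < δ := hx
  have heδ : ∀ i, ‖e i‖ ≤ δ := fun i => (he i).le
  -- term bounds
  have hSbound : ∀ (k : ℕ) (j : ℤ), ‖(L ^ k) (Ps (e j))‖ ≤ lam ^ k * (Cs * δ) := by
    intro k j
    have h1 : ‖(L ^ k) (Ps (e j))‖ ≤ lam ^ k * ‖Ps (e j)‖ := by
      rw [hLpow]; exact hs k _ (hPs_mem _)
    have h2 : ‖Ps (e j)‖ ≤ Cs * δ := by
      calc ‖Ps (e j)‖ ≤ Cs * ‖e j‖ := Ps.le_opNorm _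
        _ ≤ Cs * δ := by nlinarith [heδ j, norm_nonneg (e j)]
    calc ‖(L ^ k) (Ps (e j))‖ ≤ lam ^ k * ‖Ps (e j)‖ := h1
      _ ≤ lam ^ k * (Cs * δ) := by nlinarith [pow_pos hlam0 k]
  have hUbound : ∀ (k : ℕ) (j : ℤ), ‖(Li ^ k) (Pu (e j))‖ ≤ lam ^ k * (Cu * δ) := by
    intro k j
    have h1 : ‖(Li ^ k) (Pu (e j))‖ ≤ lam ^ k * ‖Pu (e j)‖ := by
      rw [hLipow]; exact hu k _ (hPu_mem _)
    have h2 : ‖Pu (e j)‖ ≤ Cu * δ := by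
      calc ‖Pu (e j)‖ ≤ Cu * ‖e j‖ := Pu.le_opNorm _
        _ ≤ Cu * δ := by nlinarith [heδ j, norm_nonneg (e j)]
    calc ‖(Li ^ k) (Pu (e j))‖ ≤ lam ^ k * ‖Pu (e j)‖ := h1
      _ ≤ lam ^ k * (Cu * δ) := by nlinarith [pow_pos hlam0 k]
  have hUbound' : ∀ (k : ℕ) (j : ℤ), ‖(Li ^ (k + 1)) (Pu (e j))‖ ≤ lam ^ k * (Cu * δ) := by
    intro k j
    refine (hUbound (k + 1) j).trans ?_
    have hp : 0 < lam ^ k := pow_pos hlam0 k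
    rw [pow_succ lam k]
    have hprod : 0 ≤ lam ^ k * (Cu * δ) * (1 - lam) :=
      mul_nonneg (mul_nonneg hp.le (mul_nonneg hCu0 hδ0.le)) h1lam.le
    nlinarith [hprod]
  have hgeom : Summable (fun k : ℕ => lam ^ k) :=
    summable_geometric_of_lt_one hlam0.le hlam1
  -- summability
  have hSsummable : ∀ i : ℤ, Summable (fun k : ℕ => (L ^ k) (Ps (e (i - 1 - (k : ℤ))))) := by
    intro i
    apply Summable.of_norm_bounded (g := fun k : ℕ => lam ^ k * (Cs * δ)) (hgeom.mul_right _)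
    intro k; exact hSbound k _
  have hU'summable : ∀ i : ℤ, Summable (fun k : ℕ => (Li ^ k) (Pu (e (i + (k : ℤ))))) := by
    intro i
    apply Summable.of_norm_bounded (g := fun k : ℕ => lam ^ k * (Cu * δ)) (hgeom.mul_right _)
    intro k; exact hUbound k _
  have hUsummable : ∀ i : ℤ, Summable (fun k : ℕ => (Li ^ (k + 1)) (Pu (e (i + (k : ℤ))))) := by
    intro i
    apply Summable.of_norm_bounded (g := fun k : ℕ => lam ^ k * (Cu * δ)) (hgeom.mul_right _)
    intro k; exact hUbound' k _
  -- the correction sequence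
  set S : ℤ → E := fun i => ∑' k : ℕ, (L ^ k) (Ps (e (i - 1 - (k : ℤ)))) with hSdef
  set U : ℤ → E := fun i => ∑' k : ℕ, (Li ^ (k + 1)) (Pu (e (i + (k : ℤ)))) with hUdef
  set w : ℤ → E := fun i => S i - U i with hwdef
  -- recursion for S
  have hrecS : ∀ i : ℤ, L (S i) + Ps (e i) = S (i + 1) := by
    intro i
    have h1 : L (S i) = ∑' k : ℕ, (L ^ (k + 1)) (Ps (e (i - 1 - (k : ℤ)))) := by
      rw [hSdef]
      rw [L.map_tsum (hSsummable i)]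
      refine tsum_congr fun k => ?_
      rw [pow_succ']
      rfl
    have h2 : S (i + 1) = ∑' k : ℕ, (L ^ k) (Ps (e (i - (k : ℤ)))) := by
      refine tsum_congr fun k => ?_
      congr 2
      ring
    have h3 : Summable (fun k : ℕ => (L ^ k) (Ps (e (i - (k : ℤ))))) := by
      apply Summable.of_norm_bounded (g := fun k : ℕ => lam ^ k * (Cs * δ)) (hgeom.mul_right _)
      intro k; exact hSbound k _
    rw [h2, h3.tsum_eq_zero_add]
    simp only [pow_zero, ContinuousLinearMap.one_apply, Nat.cast_zero, sub_zero]
    rw [add_comm]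
    congr 1
    rw [h1]
    refine tsum_congr fun k => ?_
    congr 2
    push_cast
    ring
  -- recursion for U
  have hrecU : ∀ i : ℤ, L (U i) - Pu (e i) = U (i + 1) := by
    intro i
    have h1 : L (U i) = ∑' k : ℕ, (Li ^ k) (Pu (e (i + (k : ℤ)))) := by
      rw [hUdef]
      rw [L.map_tsum (hUsummable i)]
      refine tsum_congr fun k => ?_
      have : (Li ^ (k + 1)) (Pu (e (i + (k : ℤ)))) = Li ((Li ^ k) (Pu (e (i + (k : ℤ))))) := by
        rw [pow_succ']; rfl
      rw [this, hLLi]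
    rw [h1, (hU'summable i).tsum_eq_zero_add]
    simp only [pow_zero, ContinuousLinearMap.one_apply, Nat.cast_zero, add_zero]
    rw [add_sub_cancel_left]
    refine tsum_congr fun k => ?_
    congr 2
    push_cast
    ring
  -- recursion for w
  have hrecw : ∀ i : ℤ, w (i + 1) = L (w i) + e i := by
    intro i
    have h1 : w (i + 1) = S (i + 1) - U (i + 1) := rfl
    rw [h1, ← hrecS i, ← hrecU i]
    have h2 : L (w i) = L (S i) - L (U i) := by
      rw [show w i = S i - U i from rfl, map_sub]
    rw [h2]
    have h3 : L (S i) + Ps (e i) - (L (U i) - Pu (e i)) =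
        L (S i) - L (U i) + (Ps (e i) + Pu (e i)) := by abel
    rw [h3, hPsPu]
  -- bound on w
  have hwbound : ∀ i : ℤ, ‖w i‖ < ε := by
    intro i
    have hSn : Summable (fun k : ℕ => ‖(L ^ k) (Ps (e (i - 1 - (k : ℤ))))‖) :=
      Summable.of_nonneg_of_le (fun k => norm_nonneg _) (fun k => hSbound k _)
        (hgeom.mul_right _)
    have hUn : Summable (fun k : ℕ => ‖(Li ^ (k + 1)) (Pu (e (i + (k : ℤ))))‖) :=
      Summable.of_nonneg_of_le (fun k => norm_nonneg _) (fun k => hUbound' k _)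
        (hgeom.mul_right _)
    have hS : ‖S i‖ ≤ (1 - lam)⁻¹ * (Cs * δ) := by
      calc ‖S i‖ ≤ ∑' k : ℕ, ‖(L ^ k) (Ps (e (i - 1 - (k : ℤ))))‖ :=
            norm_tsum_le_tsum_norm hSn
        _ ≤ ∑' k : ℕ, lam ^ k * (Cs * δ) :=
            hSn.tsum_le_tsum (fun k => hSbound k _) (hgeom.mul_right _)
        _ = (1 - lam)⁻¹ * (Cs * δ) := by
            rw [tsum_mul_right, tsum_geometric_of_lt_one hlam0.le hlam1, mul_comm]
    have hU : ‖U i‖ ≤ (1 - lam)⁻¹ * (Cu * δ) := by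
      calc ‖U i‖ ≤ ∑' k : ℕ, ‖(Li ^ (k + 1)) (Pu (e (i + (k : ℤ))))‖ :=
            norm_tsum_le_tsum_norm hUn
        _ ≤ ∑' k : ℕ, lam ^ k * (Cu * δ) :=
            hUn.tsum_le_tsum (fun k => hUbound' k _) (hgeom.mul_right _)
        _ = (1 - lam)⁻¹ * (Cu * δ) := by
            rw [tsum_mul_right, tsum_geometric_of_lt_one hlam0.le hlam1, mul_comm]
    have hw1 : ‖w i‖ ≤ ‖S i‖ + ‖U i‖ := norm_sub_le _ _
    have hkey : (1 - lam)⁻¹ * (Cs * δ) + (1 - lam)⁻¹ * (Cu * δ) < ε := by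
      have hinv1 : (1 - lam) * (1 - lam)⁻¹ = 1 := mul_inv_cancel₀ (ne_of_gt h1lam)
      have h2 : (0 : ℝ) < 2 * (Cs + Cu + 1) := by linarith
      have hinv2 : (2 * (Cs + Cu + 1)) * (2 * (Cs + Cu + 1))⁻¹ = 1 :=
        mul_inv_cancel₀ (ne_of_gt h2)
      have hinvpos : 0 < (1 - lam)⁻¹ := inv_pos.mpr h1lam
      have hinv2pos : 0 < (2 * (Cs + Cu + 1))⁻¹ := inv_pos.mpr h2
      rw [hδdef, div_eq_mul_inv]
      nlinarith [mul_pos hε h1lam, mul_pos hinvpos hinv2pos,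
        mul_nonneg (mul_nonneg hCs0 hε.le) hinv2pos.le,
        mul_nonneg (mul_nonneg hCu0 hε.le) hinv2pos.le]
    linarith
  -- the shadowing point
  set z : E := x 0 + w 0 with hzdef
  have horbit : ∀ i : ℤ, Matrix.toEuclideanLin (A ^ i) z = x i + w i := by
    intro i
    induction i using Int.induction_on with
    | zero => rw [zpow_zero, hone]
    | succ k ih =>
        have hzp : (A ^ ((k : ℤ) + 1)) = A * A ^ (k : ℤ) := by
          rw [add_comm, Matrix.zpow_add hdet 1 (k : ℤ), zpow_one]
        rw [hzp, hmul, ih, map_add]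
        have h1 : Matrix.toEuclideanLin A (x (k : ℤ)) = x ((k : ℤ) + 1) + e (k : ℤ) := by
          simp only [hedef]; abel
        have h2 : Matrix.toEuclideanLin A (w (k : ℤ)) = w ((k : ℤ) + 1) - e (k : ℤ) := by
          rw [← hLapp, hrecw (k : ℤ)]; abel
        rw [h1, h2]; abel
    | pred k ih =>
        have hzp : (A ^ (-(k : ℤ) - 1)) = A⁻¹ * A ^ (-(k : ℤ)) := by
          rw [sub_eq_add_neg, add_comm, Matrix.zpow_add hdet (-1) (-(k : ℤ)),
            Matrix.zpow_neg_one]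
        rw [hzp, hmul, ih]
        have h4 := hrecw (-(k : ℤ) - 1)
        rw [sub_add_cancel] at h4
        have h5 : e (-(k : ℤ) - 1) =
            Matrix.toEuclideanLin A (x (-(k : ℤ) - 1)) - x (-(k : ℤ)) := by
          simp only [hedef]
          rw [sub_add_cancel]
        have h6 : x (-(k : ℤ)) + w (-(k : ℤ)) =
            Matrix.toEuclideanLin A (x (-(k : ℤ) - 1) + w (-(k : ℤ) - 1)) := by
          rw [map_add, h4, hLapp, h5]; abel
        rw [h6, ← hmul, Matrix.nonsing_inv_mul A hdet, hone]
  refine ⟨z, fun i => ?_⟩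
  rw [horbit i]
  have : x i + w i - x i = w i := by abel
  rw [this]
  exact hwbound i
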